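/- arXiv:0812.2458 — 2 statements merged into one kernel-verified Lean document; each statement's English description precedes it below -/
import Mathlib

section
/- Let S ⊂ F_2^a be the span of M_a'. Then for all distinct i, j ∈ S, the translates T_a^{(i)} = i ⊕ T_a and T_a^{(j)} = j ⊕ T_a are disjoint. -/
open scoped Classical

noncomputable section

/-- `b = ⌊log₂ a⌋ + 1`. -/
def bb (a : ℕ) : ℕ := Nat.log 2 a + 1

/-- `m = 2^b - a - 1`. -/
def mm (a : ℕ) : ℕ := 2 ^ bb a - a - 1

/-- `q = a - 2^(b-1)`. -/
def qq (a : ℕ) : ℕ := a - 2 ^ (bb a - 1)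

/-- `M_a = {x : 0 < x ≤ a, x is not a power of 2}`. -/
def Ma (a : ℕ) : Set ℕ := {x | 0 < x ∧ x ≤ a ∧ ¬ ∃ k, x = 2 ^ k}

/-- `g(x) = 2x` if bit `b-1` of `x` is `0`, else `g(x) = 2x + 1 - 2^b`. -/
def gg (a x : ℕ) : ℕ := if x.testBit (bb a - 1) then 2 * x + 1 - 2 ^ bb a else 2 * x

/-- `f'(x) = x` if `x ∈ M_a`, else `f'(x) = x + 1 - 2⌈m/2⌉` (intended domain `g(M_a)`). -/
def ff' (a x : ℕ) : ℕ := if x ∈ Ma a then x else x + 1 - 2 * ((mm a + 1) / 2)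

/-- `f = f' ∘ g`. -/
def ff (a x : ℕ) : ℕ := ff' a (gg a x)

/-- the `j`-th binary digit of `x`, as a natural number. -/
def bitv (x j : ℕ) : ℕ := if x.testBit j then 1 else 0

/-- `h(x) = 2^(f(x)-1) + Σ_{j=0}^{b-2} x_j 2^(2^(j+1)-1) + x_{b-1}`. -/
def hh (a x : ℕ) : ℕ :=
  2 ^ (ff a x - 1) + (∑ j ∈ Finset.range (bb a - 1), bitv x j * 2 ^ (2 ^ (j + 1) - 1)) +
    bitv x (bb a - 1)

/-- Hamming weight of `x` viewed as a vector in `F_2^a`. -/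
def wt (a x : ℕ) : ℕ := ((Finset.range a).filter (fun j => x.testBit j)).card

/-- identification of `Z_{2^a}` with `F_2^a` via radix-2 representation. -/
def toVec (a x : ℕ) : Fin a → ZMod 2 := fun j => if x.testBit (j : ℕ) then 1 else 0

/-- `S`, the `F_2`-span of `M_a' = h(M_a)` inside `F_2^a`. -/
def Ssub (a : ℕ) : Submodule (ZMod 2) (Fin a → ZMod 2) :=
  Submodule.span (ZMod 2) (toVec a '' (hh a '' Ma a))

/-- `P_a = {0, 2^0, 2^1, …, 2^(a-1)}`. -/
def Pa (a : ℕ) : Set ℕ := {0} ∪ {y | ∃ j < a, y = 2 ^ j}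

/-- `Q_a = ∅` if `a+1` is a power of `2`, else `{1 ⊕ 2^j : a-m ≤ j ≤ a-1}`. -/
def Qa (a : ℕ) : Set ℕ :=
  if ∃ k, a + 1 = 2 ^ k then ∅ else {y | ∃ j, a - mm a ≤ j ∧ j < a ∧ y = 1 ^^^ 2 ^ j}

/-- `T_a = P_a ∪ Q_a`. -/
def Ta (a : ℕ) : Set ℕ := Pa a ∪ Qa a

end

namespace TDaux

theorem testBit_sum_two_pow (s : Finset ℕ) (t : ℕ) : (∑ p ∈ s, 2^p).testBit t = (t ∈ s) := by
  induction s using Finset.induction_on_max with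
  | empty => simp
  | insert a s hmax ih =>
    rw [Finset.sum_insert (fun h => lt_irrefl a (hmax a h))]
    have hlt : ∑ p ∈ s, 2^p < 2^a := by
      calc ∑ p ∈ s, 2^p ≤ ∑ p ∈ Finset.range a, 2^p := by
            apply Finset.sum_le_sum_of_subset
            intro x hx; exact Finset.mem_range.2 (hmax x hx)
        _ < 2^a := by
            have h1 := Nat.geomSum_eq (le_refl 2) a
            have h2 : 0 < 2^a := Nat.pow_pos (by norm_num)
            simp at h1
            omega
    rcases lt_trichotomy t a with h | h | h
    · rw [Nat.testBit_two_pow_add_gt h]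
      simp [ih]
      intro hc; omega
    · subst h
      rw [Nat.testBit_two_pow_add_eq, Nat.testBit_lt_two_pow hlt]
      simp
    · have h2 : 2^a + ∑ p ∈ s, 2^p < 2^t := by
        calc 2^a + ∑ p ∈ s, 2^p < 2^(a+1) := by omega
          _ ≤ 2^t := Nat.pow_le_pow_right (by norm_num) h
      rw [Nat.testBit_lt_two_pow h2]
      simp
      constructor
      · omega
      · intro hc; have := hmax t hc; omega

/-- the column function of the parity-check matrix -/
def colv (a p : ℕ) : ℕ :=
  if p = 0 then 2^(bb a - 1)
  else if p % 2 = 1 then (p+1)/2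
  else if p ≤ 2 * qq a then p/2 + 2^(bb a - 1)
  else p/2 + (mm a + 1)/2

section basics
variable {a : ℕ}

lemma two_le_bb (ha : 2 ≤ a) : 2 ≤ bb a := by
  have : 1 ≤ Nat.log 2 a := Nat.le_log_of_pow_le (by norm_num) (by simpa using ha)
  simp [bb]; omega

lemma pow_le_a (ha : 2 ≤ a) : 2 ^ (bb a - 1) ≤ a := by
  simpa [bb] using Nat.pow_log_le_self 2 (by omega : a ≠ 0)

lemma a_lt_pow (ha : 2 ≤ a) : a < 2 * 2 ^ (bb a - 1) := by
  have h := Nat.lt_pow_succ_log_self (by norm_num : 1 < 2) a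
  have : 2 ^ (Nat.log 2 a + 1) = 2 * 2 ^ (bb a - 1) := by
    simp [bb, pow_succ]; ring
  omega

lemma pow_bb_eq (ha : 2 ≤ a) : 2 ^ bb a = 2 * 2 ^ (bb a - 1) := by
  have h2 := two_le_bb (a := a) ha
  conv_lhs => rw [show bb a = (bb a - 1) + 1 by omega]
  ring

lemma mm_eq (ha : 2 ≤ a) : mm a = 2 * 2 ^ (bb a - 1) - a - 1 := by
  rw [mm, pow_bb_eq ha]

lemma two_le_P (ha : 2 ≤ a) : 2 ≤ 2 ^ (bb a - 1) := by
  have h2 := two_le_bb (a := a) ha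
  calc 2 = 2^1 := rfl
    _ ≤ _ := Nat.pow_le_pow_right (by norm_num) (by omega)

-- col bounds
lemma colv_bounds (ha : 2 ≤ a) {p : ℕ} (hp : p < a) :
    1 ≤ colv a p ∧ colv a p ≤ a ∧ colv a p < 2 * 2 ^ (bb a - 1) := by
  have h1 := pow_le_a ha
  have h2 := a_lt_pow ha
  have h3 := two_le_P ha
  have h4 := mm_eq ha
  unfold colv qq
  split_ifs <;> omega

lemma colv_inj (ha : 2 ≤ a) {p p' : ℕ} (hp : p < a) (hp' : p' < a) (hne : p ≠ p') :
    colv a p ≠ colv a p' := by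
  have h1 := pow_le_a ha
  have h2 := a_lt_pow ha
  have h3 := two_le_P ha
  have h4 := mm_eq ha
  unfold colv qq
  split_ifs <;> omega

lemma colv_high (ha : 2 ≤ a) {p : ℕ} (hp : p < a) (hp2 : 2 * qq a + 1 ≤ p) :
    qq a + 1 ≤ colv a p ∧ colv a p < 2 ^ (bb a - 1) := by
  have h1 := pow_le_a ha
  have h2 := a_lt_pow ha
  have h3 := two_le_P ha
  have h4 := mm_eq ha
  unfold colv qq at *
  split_ifs <;> omega

lemma a_sub_mm (ha : 2 ≤ a) : a - mm a = 2 * qq a + 1 := by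
  have h1 := pow_le_a ha
  have h2 := a_lt_pow ha
  have h4 := mm_eq ha
  unfold qq at *
  omega

end basics

lemma testBit_top {x k : ℕ} (hx : x < 2 * 2 ^ k) : x.testBit k = decide (2 ^ k ≤ x) := by
  rw [Nat.testBit_eq_decide_div_mod_eq]
  rcases le_or_gt (2 ^ k) x with h | h
  · have : x / 2 ^ k = 1 := by
      have := Nat.div_mul_le_self x (2^k)
      have h0 : 0 < 2 ^ k := Nat.pow_pos (by norm_num)
      have hle : 1 ≤ x / 2 ^ k := (Nat.one_le_div_iff h0).2 h
      have hlt : x / 2 ^ k < 2 := Nat.div_lt_of_lt_mul (by omega)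
      omega
    simp [this, h]
  · have : x / 2 ^ k = 0 := Nat.div_eq_of_lt h
    simp [this, h, not_le.2 h]

lemma ff_spec {a x : ℕ} (ha : 2 ≤ a) (hx : x ∈ Ma a) :
    2 ≤ ff a x ∧ ff a x ≤ a ∧ colv a (ff a x - 1) = x ∧
      (∀ j, ff a x ≠ 2 ^ (j + 1)) ∧ ff a x ≠ 1 := by
  obtain ⟨hx1, hx2, hx3⟩ := hx
  have h1 := pow_le_a ha
  have h2 := a_lt_pow ha
  have h3 := two_le_P ha
  have h4 := mm_eq ha
  have hb := pow_bb_eq ha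
  have hxlt : x < 2 * 2 ^ (bb a - 1) := by omega
  have hxP : x ≠ 2 ^ (bb a - 1) := fun h => hx3 ⟨bb a - 1, h⟩
  have hx3' : x ≠ 1 := fun h => hx3 ⟨0, by simpa using h⟩
  have hx3'' : x ≠ 2 := fun h => hx3 ⟨1, by simpa using h⟩
  have hx4 : 3 ≤ x := by omega
  rw [ff, gg, testBit_top hxlt]
  rcases le_or_gt (2 ^ (bb a - 1)) x with hP | hP
  · -- top bit set
    have hPx : 2 ^ (bb a - 1) < x := by omega
    rw [if_pos (by simpa using hP)]
    set y := 2 * x + 1 - 2 ^ bb a with hy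
    have hyv : y = 2 * (x - 2 ^ (bb a - 1)) + 1 := by omega
    have hy3 : 3 ≤ y := by omega
    have hyodd : y % 2 = 1 := by omega
    have hynp : ¬ ∃ k, y = 2 ^ k := by
      rintro ⟨k, hk⟩
      rcases k with _ | k
      · simp at hk; omega
      · have : (2:ℕ) ^ (k+1) = 2 * 2 ^ k := by ring
        omega
    have hya : y ≤ a := by omega
    rw [ff', if_pos ⟨by omega, hya, hynp⟩]
    refine ⟨by omega, hya, ?_, ?_, by omega⟩
    · rw [colv]
      have hq : qq a = a - 2 ^ (bb a - 1) := rfl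
      split_ifs <;> omega
    · intro j hj
      have : (2:ℕ) ^ (j+1) = 2 * 2 ^ j := by ring
      have : 1 ≤ 2 ^ j := Nat.one_le_two_pow
      omega
  · -- top bit clear
    rw [if_neg (by simpa using not_le.2 hP)]
    have hnp2 : ¬ ∃ k, 2 * x = 2 ^ k := by
      rintro ⟨k, hk⟩
      rcases k with _ | k
      · omega
      · refine hx3 ⟨k, ?_⟩
        have : (2:ℕ)^(k+1) = 2*2^k := by ring
        omega
    rcases le_or_gt (2 * x) a with h2a | h2a
    · rw [ff', if_pos ⟨by omega, h2a, hnp2⟩]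
      refine ⟨by omega, h2a, ?_, ?_, by omega⟩
      · rw [colv]
        split_ifs <;> omega
      · intro j hj
        refine hx3 ⟨j, ?_⟩
        have : (2:ℕ)^(j+1) = 2*2^j := by ring
        omega
    · rw [ff', if_neg (by rintro ⟨-, h, -⟩; omega)]
      set c := (mm a + 1) / 2 with hc
      have hcv : 2 * c = 2 * 2 ^ (bb a - 1) - a - ((2 * 2 ^ (bb a - 1) - a) % 2) := by omega
      set z := 2 * x + 1 - 2 * c with hz
      have hz1 : z = 2 * (x - c) + 1 := by omega
      have hzq : 2 * (a - 2 ^ (bb a - 1)) + 2 ≤ z - 1 := by omega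
      refine ⟨by omega, by omega, ?_, ?_, by omega⟩
      · rw [colv]
        have hq : qq a = a - 2 ^ (bb a - 1) := rfl
        split_ifs <;> omega
      · intro j hj
        have : (2:ℕ) ^ (j+1) = 2 * 2 ^ j := by ring
        have : 1 ≤ 2 ^ j := Nat.one_le_two_pow
        omega

/-- set of bit positions of `hh a x` -/
noncomputable def hset (a x : ℕ) : Finset ℕ :=
  insert (ff a x - 1)
    ((((Finset.range (bb a - 1)).filter (fun j => x.testBit j)).image (fun j => 2^(j+1)-1))
      ∪ (if x.testBit (bb a - 1) then {0} else ∅))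

lemma ffm1_not_mem {a x : ℕ} (ha : 2 ≤ a) (hx : x ∈ Ma a) :
    ff a x - 1 ∉ ((((Finset.range (bb a - 1)).filter (fun j => x.testBit j)).image
        (fun j => 2^(j+1)-1)) ∪ (if x.testBit (bb a - 1) then {0} else ∅)) := by
  obtain ⟨hf2, -, -, hfp, hf1⟩ := ff_spec ha hx
  intro hmem
  rcases Finset.mem_union.1 hmem with h | h
  · obtain ⟨j, -, hj⟩ := Finset.mem_image.1 h
    have h1 : (1:ℕ) ≤ 2 ^ (j+1) := Nat.one_le_two_pow
    exact hfp j (by omega)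
  · split_ifs at h
    · simp at h; omega
    · simp at h

lemma hdisj (a x : ℕ) : Disjoint
      (((Finset.range (bb a - 1)).filter (fun j => x.testBit j)).image (fun j => 2^(j+1)-1))
      (if x.testBit (bb a - 1) then ({0}:Finset ℕ) else ∅) := by
  rw [Finset.disjoint_right]
  intro p hp hp2
  obtain ⟨j, -, hj⟩ := Finset.mem_image.1 hp2
  have h1 : (2:ℕ) ≤ 2 ^ (j+1) := by
    calc (2:ℕ) = 2^1 := rfl
      _ ≤ _ := Nat.pow_le_pow_right (by norm_num) (by omega)
  split_ifs at hp
  · simp at hp; omega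
  · simp at hp

lemma hinj (a x : ℕ) : ∀ i ∈ (Finset.range (bb a - 1)).filter (fun j => x.testBit j),
      ∀ j ∈ (Finset.range (bb a - 1)).filter (fun j => x.testBit j),
      2^(i+1)-1 = 2^(j+1)-1 → i = j := by
  intro i _ j _ hij
  have h1 : (1:ℕ) ≤ 2 ^ (i+1) := Nat.one_le_two_pow
  have h2 : (1:ℕ) ≤ 2 ^ (j+1) := Nat.one_le_two_pow
  have := Nat.pow_right_injective (le_refl 2) (show (2:ℕ)^(i+1) = 2^(j+1) by omega)
  omega

lemma hh_eq_sum {a x : ℕ} (ha : 2 ≤ a) (hx : x ∈ Ma a) :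
    hh a x = ∑ p ∈ hset a x, 2 ^ p := by
  rw [hset, Finset.sum_insert (ffm1_not_mem ha hx), Finset.sum_union (hdisj a x), Finset.sum_image (hinj a x)]
  rw [hh]
  have h1 : ∑ j ∈ Finset.range (bb a - 1), bitv x j * 2 ^ (2 ^ (j + 1) - 1)
      = ∑ j ∈ (Finset.range (bb a - 1)).filter (fun j => x.testBit j), 2 ^ (2 ^ (j+1) - 1) := by
    rw [Finset.sum_filter]
    congr 1; funext j
    by_cases h : x.testBit j <;> simp [bitv, h]
  have h2 : (bitv x (bb a - 1) : ℕ)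
      = ∑ p ∈ (if x.testBit (bb a - 1) then ({0}:Finset ℕ) else ∅), 2 ^ p := by
    by_cases h : x.testBit (bb a - 1) <;> simp [bitv, h]
  rw [h1, h2]
  ring

lemma hh_testBit {a x : ℕ} (ha : 2 ≤ a) (hx : x ∈ Ma a) (t : ℕ) :
    ((hh a x).testBit t = true) ↔ (t ∈ hset a x) := by
  rw [hh_eq_sum ha hx]
  exact Eq.to_iff (testBit_sum_two_pow _ t)

lemma hset_subset {a x : ℕ} (ha : 2 ≤ a) (hx : x ∈ Ma a) :
    hset a x ⊆ Finset.range a := by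
  obtain ⟨hf2, hfa, -, -, -⟩ := ff_spec ha hx
  intro p hp
  rw [Finset.mem_range]
  rw [hset] at hp
  rcases Finset.mem_insert.1 hp with rfl | hp
  · omega
  · rcases Finset.mem_union.1 hp with h | h
    · obtain ⟨j, hj1, hj2⟩ := Finset.mem_image.1 h
      have hj3 := Finset.mem_range.1 (Finset.mem_filter.1 hj1).1
      have h4 : 2 ^ (j+1) ≤ 2 ^ (bb a - 1) := Nat.pow_le_pow_right (by norm_num) (by omega)
      have h5 := pow_le_a ha
      have : (1:ℕ) ≤ 2 ^ (j+1) := Nat.one_le_two_pow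
      omega
    · split_ifs at h
      · simp at h; omega
      · simp at h

/-- the `r`-th parity check functional -/
noncomputable def phi (a r : ℕ) : (Fin a → ZMod 2) →ₗ[ZMod 2] ZMod 2 :=
  ∑ p : Fin a, (if (colv a (p:ℕ)).testBit r then (1:ZMod 2) else 0) • LinearMap.proj p

lemma phi_apply {a r : ℕ} (v : Fin a → ZMod 2) :
    phi a r v = ∑ p : Fin a, (if (colv a (p:ℕ)).testBit r then (1:ZMod 2) else 0) * v p := by
  simp only [phi, LinearMap.sum_apply, LinearMap.smul_apply, LinearMap.proj_apply,
    smul_eq_mul]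

lemma phi_indicator {a r : ℕ} (S : Finset ℕ) (hS : S ⊆ Finset.range a) :
    phi a r (fun p => if (p:ℕ) ∈ S then 1 else 0)
      = ∑ p ∈ S, (if (colv a p).testBit r then (1:ZMod 2) else 0) := by
  rw [phi_apply]
  have h1 : ∀ p : Fin a, (if (colv a (p:ℕ)).testBit r then (1:ZMod 2) else 0) *
      (if (p:ℕ) ∈ S then 1 else 0)
      = if (p:ℕ) ∈ S then (if (colv a (p:ℕ)).testBit r then (1:ZMod 2) else 0) else 0 := by
    intro p
    by_cases h : (p:ℕ) ∈ S <;> simp [h]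
  simp_rw [h1]
  rw [Fin.sum_univ_eq_sum_range (fun p => if p ∈ S then (if (colv a p).testBit r then (1:ZMod 2) else 0) else 0)]
  rw [Finset.sum_ite_mem, Finset.inter_eq_right.2 hS]

lemma colv_parity (a j : ℕ) : colv a (2^(j+1) - 1) = 2^j := by
  have h1 : (2:ℕ)^(j+1) = 2 * 2^j := by ring
  have h2 : (1:ℕ) ≤ 2^j := Nat.one_le_two_pow
  rw [colv]
  split_ifs <;> omega

lemma colv_zero (a : ℕ) : colv a 0 = 2^(bb a - 1) := by simp [colv]

lemma toVec_hh {a x : ℕ} (ha : 2 ≤ a) (hx : x ∈ Ma a) :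
    toVec a (hh a x) = fun p : Fin a => if (p:ℕ) ∈ hset a x then 1 else 0 := by
  funext p
  rw [toVec]
  by_cases h : (hh a x).testBit (p:ℕ)
  · rw [if_pos h, if_pos ((hh_testBit ha hx _).1 h)]
  · rw [if_neg h, if_neg (fun hm => h ((hh_testBit ha hx _).2 hm))]

lemma phi_gen {a x r : ℕ} (ha : 2 ≤ a) (hx : x ∈ Ma a) (hr : r < bb a) :
    phi a r (toVec a (hh a x)) = 0 := by
  obtain ⟨hf2, hfa, hfc, hfp, hf1⟩ := ff_spec ha hx
  rw [toVec_hh ha hx, phi_indicator _ (hset_subset ha hx), hset,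
    Finset.sum_insert (ffm1_not_mem ha hx), Finset.sum_union (hdisj a x),
    Finset.sum_image (hinj a x)]
  rw [hfc]
  have h2 : ∀ j, ((if (colv a (2^(j+1)-1)).testBit r then (1:ZMod 2) else 0))
      = (if j = r then (1:ZMod 2) else 0) := by
    intro j
    rw [colv_parity, Nat.testBit_two_pow]
    by_cases h : j = r <;> simp [h]
  simp_rw [h2]
  rw [Finset.sum_ite_eq' ((Finset.range (bb a - 1)).filter (fun j => x.testBit j)) r
    (fun _ => (1:ZMod 2))]
  have h3 : ∑ p ∈ (if x.testBit (bb a - 1) then ({0}:Finset ℕ) else ∅),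
      (if (colv a p).testBit r then (1:ZMod 2) else 0)
      = if x.testBit (bb a - 1) then (if bb a - 1 = r then (1:ZMod 2) else 0) else 0 := by
    by_cases h : x.testBit (bb a - 1)
    · rw [if_pos h, if_pos h, Finset.sum_singleton, colv_zero, Nat.testBit_two_pow]
      by_cases h4 : bb a - 1 = r <;> simp [h4]
    · rw [if_neg h, if_neg h, Finset.sum_empty]
  rw [h3]
  rcases Nat.lt_or_ge r (bb a - 1) with hrb | hrb
  · have hne : bb a - 1 ≠ r := by omega
    have hmem : (r ∈ (Finset.range (bb a - 1)).filter (fun j => x.testBit j)) ↔ x.testBit r := by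
      simp [Finset.mem_filter, Finset.mem_range, hrb]
    have hC : (if x.testBit (bb a - 1) then (if bb a - 1 = r then (1:ZMod 2) else 0) else 0)
        = 0 := by simp [hne]
    rw [hC]
    by_cases hxr : x.testBit r
    · rw [if_pos hxr, if_pos (hmem.2 hxr)]; decide
    · rw [if_neg hxr, if_neg (fun h => hxr (hmem.1 h))]; decide
  · have hre : bb a - 1 = r := by
      have : bb a = Nat.log 2 a + 1 := rfl
      omega
    have hnm : r ∉ (Finset.range (bb a - 1)).filter (fun j => x.testBit j) := by
      intro h
      have := Finset.mem_range.1 (Finset.mem_filter.1 h).1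
      omega
    rw [if_neg hnm, ← hre]
    by_cases hxr : x.testBit (bb a - 1)
    · rw [if_pos hxr, if_pos hxr, if_pos rfl]; decide
    · rw [if_neg hxr, if_neg hxr]; decide

lemma phi_vanish {a r : ℕ} (ha : 2 ≤ a) (hr : r < bb a) {v : Fin a → ZMod 2}
    (hv : v ∈ Ssub a) : phi a r v = 0 := by
  have hle : Ssub a ≤ LinearMap.ker (phi a r) := by
    rw [Ssub]
    apply Submodule.span_le.2
    rintro w ⟨y, ⟨x, hx, rfl⟩, rfl⟩
    simpa [LinearMap.mem_ker] using phi_gen ha hx hr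
  simpa using hle hv

lemma toVec_xor (a u v : ℕ) : toVec a (u ^^^ v) = toVec a u + toVec a v := by
  funext p
  simp only [toVec, Pi.add_apply, Nat.testBit_xor]
  cases h1 : u.testBit (p:ℕ) <;> cases h2 : v.testBit (p:ℕ) <;> simp <;> decide

lemma phi_single {a j : ℕ} (hj : j < a) (r : ℕ) :
    phi a r (toVec a (2^j)) = (if (colv a j).testBit r then (1:ZMod 2) else 0) := by
  have h : toVec a (2^j) = fun p : Fin a => if (p:ℕ) ∈ ({j}:Finset ℕ) then 1 else 0 := by
    funext p
    simp only [toVec, Nat.testBit_two_pow, Finset.mem_singleton]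
    by_cases h : (p:ℕ) = j
    · simp [h]
    · have h5 : ¬ (j = (p:ℕ)) := fun hc => h hc.symm
      simp [h, h5]
  rw [h, phi_indicator _ (by simpa [Finset.singleton_subset_iff] using hj),
    Finset.sum_singleton]

lemma cl1 {a j : ℕ} (ha : 2 ≤ a) (hj : j < a)
    (h : ∀ r < bb a, (if (colv a j).testBit r then (1:ZMod 2) else 0) = 0) : False := by
  have hlt : colv a j < 2 * 2 ^ (bb a - 1) := (colv_bounds ha hj).2.2
  have h2 : (2:ℕ) * 2 ^ (bb a - 1) ≤ 2 ^ bb a := by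
    have h3 : bb a = (bb a - 1) + 1 := by have : bb a = Nat.log 2 a + 1 := rfl; omega
    conv_rhs => rw [h3, pow_succ]
    omega
  have hz : ∀ r, (colv a j).testBit r = false := by
    intro r
    rcases lt_or_ge r (bb a) with hr | hr
    · by_contra hb
      have h4 := h r hr
      rw [if_pos (by simpa using hb)] at h4
      exact one_ne_zero h4
    · exact Nat.testBit_lt_two_pow (lt_of_lt_of_le hlt (h2.trans (Nat.pow_le_pow_right (by norm_num) hr)))
  have : colv a j = 0 := by
    have := Nat.lt_pow_two_of_testBit (n := 0) (colv a j) (fun i _ => hz i)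
    simpa using this
  have := (colv_bounds ha hj).1
  omega

lemma pow_bb_ge {a : ℕ} (r : ℕ) (hr : bb a ≤ r) : 2 * 2 ^ (bb a - 1) ≤ 2 ^ r := by
  have h3 : bb a = (bb a - 1) + 1 := by have : bb a = Nat.log 2 a + 1 := rfl; omega
  have h4 : 2 * 2 ^ (bb a - 1) = 2 ^ bb a := by
    conv_rhs => rw [h3, pow_succ]
    omega
  rw [h4]
  exact Nat.pow_le_pow_right (by norm_num) hr

lemma cl2 {a j k : ℕ} (ha : 2 ≤ a) (hj : j < a) (hk : k < a) (hne : j ≠ k)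
    (h : ∀ r < bb a, (if (colv a j).testBit r then (1:ZMod 2) else 0)
      + (if (colv a k).testBit r then (1:ZMod 2) else 0) = 0) : False := by
  apply colv_inj ha hj hk hne
  apply Nat.eq_of_testBit_eq
  intro r
  rcases lt_or_ge r (bb a) with hr | hr
  · have h4 := h r hr
    cases h1 : (colv a j).testBit r <;> cases h2 : (colv a k).testBit r <;>
      rw [h1, h2] at h4 <;> simp_all <;> exact absurd h4 (by decide)
  · rw [Nat.testBit_lt_two_pow (lt_of_lt_of_le (colv_bounds ha hj).2.2 (pow_bb_ge r hr)),
      Nat.testBit_lt_two_pow (lt_of_lt_of_le (colv_bounds ha hk).2.2 (pow_bb_ge r hr))]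

lemma cl3 {a j k : ℕ} (ha : 2 ≤ a) (hj : j < a) (hk : k < a) (hj0 : j ≠ 0) (hk0 : k ≠ 0)
    (hne : j ≠ k) (hkq : 2 * qq a + 1 ≤ k)
    (h : ∀ r < bb a, (if (colv a 0).testBit r then (1:ZMod 2) else 0)
      + (if (colv a j).testBit r then (1:ZMod 2) else 0)
      + (if (colv a k).testBit r then (1:ZMod 2) else 0) = 0) : False := by
  have hb1 : bb a - 1 < bb a := by have : bb a = Nat.log 2 a + 1 := rfl; omega
  have hkh := colv_high ha hk hkq
  have hktop : (colv a k).testBit (bb a - 1) = false :=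
    Nat.testBit_lt_two_pow hkh.2
  have h0top : (colv a 0).testBit (bb a - 1) = true := by
    rw [colv_zero, Nat.testBit_two_pow]; simp
  -- top bit of colv j is set
  have hjtop : (colv a j).testBit (bb a - 1) = true := by
    have h4 := h _ hb1
    rw [h0top, hktop] at h4
    cases h5 : (colv a j).testBit (bb a - 1)
    · rw [h5] at h4; exact absurd h4 (by decide)
    · rfl
  have hjge : 2 ^ (bb a - 1) ≤ colv a j := Nat.ge_two_pow_of_testBit hjtop
  -- low bits agree
  have hmod : colv a j % 2 ^ (bb a - 1) = colv a k := by
    apply Nat.eq_of_testBit_eq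
    intro r
    rw [Nat.testBit_mod_two_pow]
    rcases lt_or_ge r (bb a - 1) with hr | hr
    · simp only [hr, decide_eq_true_eq, if_true, decide_true, Bool.true_and]
      have h4 := h r (by omega)
      have hne2 : bb a - 1 ≠ r := by omega
      rw [colv_zero, Nat.testBit_two_pow, if_neg (by simp [hne2])] at h4
      cases h1 : (colv a j).testBit r <;> cases h2 : (colv a k).testBit r <;>
        rw [h1, h2] at h4 <;> first | rfl | exact absurd h4 (by decide)
    · have : ¬ r < bb a - 1 := by omega
      simp only [this, decide_false, Bool.false_and]
      exact (Nat.testBit_lt_two_pow (lt_of_lt_of_le hkh.2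
        (Nat.pow_le_pow_right (by norm_num) hr))).symm
  -- conclude colv j = 2^(b-1) + colv k
  have hdiv := Nat.div_add_mod (colv a j) (2 ^ (bb a - 1))
  have hpos : 0 < 2 ^ (bb a - 1) := Nat.pow_pos (by norm_num)
  have hle1 : 1 ≤ colv a j / 2 ^ (bb a - 1) := (Nat.one_le_div_iff hpos).2 hjge
  have hlt2 : colv a j / 2 ^ (bb a - 1) < 2 :=
    Nat.div_lt_of_lt_mul (by have := (colv_bounds ha hj).2.2; omega)
  have hd1 : colv a j / 2 ^ (bb a - 1) = 1 := by omega
  rw [hd1, mul_one, hmod] at hdiv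
  -- contradiction with sizes
  have hja := (colv_bounds ha hj).2.1
  have hq : qq a = a - 2 ^ (bb a - 1) := rfl
  have hpa := pow_le_a ha
  omega

lemma phi_xor {a r : ℕ} (u v : ℕ) :
    phi a r (toVec a (u ^^^ v)) = phi a r (toVec a u) + phi a r (toVec a v) := by
  rw [toVec_xor, map_add]


end TDaux

open TDaux in
/-- for distinct `i, j ∈ S` the translates `i ⊕ T_a` and `j ⊕ T_a`
are disjoint. -/
theorem translates_disjoint (a : ℕ) (ha : 2 ≤ a) :
    ∀ i j : ℕ, i < 2 ^ a → j < 2 ^ a →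
      toVec a i ∈ Ssub a → toVec a j ∈ Ssub a → i ≠ j →
      Disjoint ((fun t => i ^^^ t) '' Ta a) ((fun t => j ^^^ t) '' Ta a) := by
  intro i j hi hj hvi hvj hij
  rw [Set.disjoint_left]
  rintro z ⟨t, ht, rfl⟩ ⟨t', ht', hz⟩
  simp only at hz
  have ha0 : 0 < a := by omega
  -- from  j ^^^ t' = i ^^^ t  deduce  t ^^^ t' = i ^^^ j
  have hu : t ^^^ t' = i ^^^ j := by
    apply Nat.eq_of_testBit_eq
    intro p
    have h2 := congrArg (fun n => n.testBit p) hz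
    simp only [Nat.testBit_xor] at h2 ⊢
    revert h2
    cases i.testBit p <;> cases j.testBit p <;> cases t.testBit p <;> cases t'.testBit p <;>
      decide
  have hne : t ≠ t' := by
    rintro rfl
    apply hij
    have h2 := congrArg (fun n => n ^^^ t) hz
    simpa [xor_cancel_right] using h2.symm
  have hS : toVec a (t ^^^ t') ∈ Ssub a := by
    rw [hu, toVec_xor]
    exact Submodule.add_mem _ hvi hvj
  have hphi : ∀ r < bb a, phi a r (toVec a (t ^^^ t')) = 0 := fun r hr =>
    phi_vanish ha hr hS
  clear hu hS hz hvi hvj hi hj hij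
  -- unpack memberships
  have hQ : ∀ s, s ∈ Qa a → ∃ k, 2 * qq a + 1 ≤ k ∧ k < a ∧ s = 1 ^^^ 2 ^ k := by
    intro s hs
    rw [Qa] at hs
    split_ifs at hs with hq
    · simp at hs
    · obtain ⟨k, h1, h2, h3⟩ := hs
      exact ⟨k, by rw [← a_sub_mm ha]; exact h1, h2, h3⟩
  -- helper eliminators
  have E1 : ∀ k, k < a → (∀ r < bb a, phi a r (toVec a (2^k)) = 0) → False := by
    intro k hk h
    exact cl1 ha hk (fun r hr => by rw [← phi_single hk r]; exact h r hr)
  have E2 : ∀ k l, k < a → l < a → k ≠ l →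
      (∀ r < bb a, phi a r (toVec a (2^k ^^^ 2^l)) = 0) → False := by
    intro k l hk hl hkl h
    apply cl2 ha hk hl hkl
    intro r hr
    rw [← phi_single hk r, ← phi_single hl r, ← phi_xor]
    exact h r hr
  have E3 : ∀ k l, k < a → l < a → k ≠ 0 → l ≠ 0 → k ≠ l → 2 * qq a + 1 ≤ l →
      (∀ r < bb a, phi a r (toVec a (2^k ^^^ (1 ^^^ 2^l))) = 0) → False := by
    intro k l hk hl hk0 hl0 hkl hlq h
    apply cl3 ha hk hl hk0 hl0 hkl hlq
    intro r hr
    have h4 := h r hr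
    rw [phi_xor, show (1:ℕ) = 2^0 from rfl, phi_xor, phi_single hk r, phi_single ha0 r,
      phi_single hl r] at h4
    linear_combination h4
  rcases ht with (h0 | ⟨α, hα, rfl⟩) | hQt
  · -- t = 0
    rw [Set.mem_singleton_iff] at h0
    subst h0
    rcases ht' with hP' | hQt'
    · rcases hP' with h0' | ⟨β, hβ, rfl⟩
      · rw [Set.mem_singleton_iff] at h0'; exact hne (h0'.symm)
      · exact E1 β hβ (fun r hr => by
          have := hphi r hr; rwa [Nat.zero_xor] at this)
    · obtain ⟨k, hk1, hk2, rfl⟩ := hQ _ hQt'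
      refine E2 0 k ha0 hk2 (by omega) (fun r hr => ?_)
      have := hphi r hr
      rwa [Nat.zero_xor, show (1:ℕ) = 2^0 from rfl] at this
  · rcases ht' with hP' | hQt'
    · rcases hP' with h0' | ⟨β, hβ, rfl⟩
      · -- t' = 0
        rw [Set.mem_singleton_iff] at h0'
        subst h0'
        exact E1 α hα (fun r hr => by
          have := hphi r hr; rwa [Nat.xor_zero] at this)
      · -- t = 2^α, t' = 2^β
        refine E2 α β hα hβ (fun h => hne (by rw [h])) (fun r hr => hphi r hr)
    · -- t = 2^α, t' = 1 ^^^ 2^k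
      obtain ⟨k, hk1, hk2, rfl⟩ := hQ _ hQt'
      by_cases hα0 : α = 0
      · subst hα0
        refine E1 k hk2 (fun r hr => ?_)
        have := hphi r hr
        rwa [show (2:ℕ)^0 = 1 from rfl, xor_cancel_left] at this
      · by_cases hαk : α = k
        · subst hαk
          refine E1 0 ha0 (fun r hr => ?_)
          have := hphi r hr
          rwa [Nat.xor_comm 1 (2^α), xor_cancel_left,
            show (1:ℕ) = 2^0 from rfl] at this
        · exact E3 α k hα hk2 hα0 (by omega) hαk hk1 (fun r hr => hphi r hr)
  · -- t ∈ Qa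
    obtain ⟨k, hk1, hk2, rfl⟩ := hQ _ hQt
    rcases ht' with hP' | hQt'
    · rcases hP' with h0' | ⟨β, hβ, rfl⟩
      · rw [Set.mem_singleton_iff] at h0'
        subst h0'
        refine E2 0 k ha0 hk2 (by omega) (fun r hr => ?_)
        have := hphi r hr
        rwa [Nat.xor_zero, show (1:ℕ) = 2^0 from rfl] at this
      · -- t = 1^^^2^k, t' = 2^β
        by_cases hβ0 : β = 0
        · subst hβ0
          refine E1 k hk2 (fun r hr => ?_)
          have := hphi r hr
          rwa [show ((1:ℕ) ^^^ 2^k) ^^^ 2^0 = 2^k by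
            rw [show (2:ℕ)^0 = 1 from rfl, Nat.xor_comm 1 (2^k), xor_cancel_right]] at this
        · by_cases hβk : β = k
          · subst hβk
            refine E1 0 ha0 (fun r hr => ?_)
            have := hphi r hr
            rwa [show ((1:ℕ) ^^^ 2^β) ^^^ 2^β = 2^0 by rw [xor_cancel_right]; norm_num] at this
          · refine E3 β k hβ hk2 hβ0 (by omega) hβk hk1 (fun r hr => ?_)
            have := hphi r hr
            rwa [Nat.xor_comm (1 ^^^ 2^k) (2^β)] at this
    · -- both in Qa
      obtain ⟨l, hl1, hl2, rfl⟩ := hQ _ hQt'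
      have hkl : k ≠ l := fun h => hne (by rw [h])
      refine E2 k l hk2 hl2 hkl (fun r hr => ?_)
      have := hphi r hr
      rwa [show (1 ^^^ 2^k) ^^^ (1 ^^^ 2^l) = 2^k ^^^ 2^l by
        rw [Nat.xor_comm 1 (2^k), Nat.xor_assoc, xor_cancel_left]] at this
end

section
/- Let a be a positive integer and b the unique integer with 2^{b-1} ≤ a < 2^b. Then Z_{2^a} can be partitioned into 2^b subsets C_0, ..., C_{2^b - 1}, each of cardinality 2^{a-b}, such that for any two distinct elements x, y lying in the same subset C_j, the translates x ⊕ T_a and y ⊕ T_a are disjoint. -/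
open scoped Classical

noncomputable section
-- basic facts
lemma pow_bb_eq (a : ℕ) (ha : 1 ≤ a) : 2 ^ bb a = a + mm a + 1 := by
  have h2 : a < 2 ^ (Nat.log 2 a + 1) := Nat.lt_pow_succ_log_self (by norm_num) a
  unfold mm bb at *; omega

lemma pow_bb_half (a : ℕ) (ha : 1 ≤ a) : 2 ^ bb a = 2 * 2 ^ (bb a - 1) ∧ 2 ^ (bb a - 1) ≤ a := by
  have h1 : 2 ^ Nat.log 2 a ≤ a := Nat.pow_log_le_self 2 (by omega)
  have h3 : bb a - 1 = Nat.log 2 a := by simp [bb]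
  constructor
  · rw [h3, bb, pow_succ]; ring
  · rw [h3]; exact h1

lemma mm_lt (a : ℕ) (ha : 1 ≤ a) : mm a < a ∧ 1 ≤ a - mm a := by
  have h1 := pow_bb_eq a ha
  have h2 := pow_bb_half a ha
  omega

lemma bb_le (a : ℕ) (ha : 1 ≤ a) : bb a ≤ a := by
  have h2 := pow_bb_half a ha
  have h3 : bb a - 1 < 2 ^ (bb a - 1) := Nat.lt_two_pow_self
  omega

lemma pow_bb_even (a : ℕ) : 2 ^ bb a % 2 = 0 := by
  have : bb a = (bb a - 1) + 1 := by simp [bb]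
  rw [this, pow_succ]; omega
end

noncomputable section
def col (a j : ℕ) : ℕ := if j < a - mm a then j + 1 else 2 ^ bb a - 2 * (a - j)

lemma col_pos_lt (a : ℕ) (ha : 1 ≤ a) {j : ℕ} (hj : j < a) :
    0 < col a j ∧ col a j < 2 ^ bb a := by
  have h1 := pow_bb_eq a ha; have h2 := mm_lt a ha
  unfold col; split_ifs <;> omega

lemma col_inj (a : ℕ) (ha : 1 ≤ a) {i j : ℕ} (hi : i < a) (hj : j < a)
    (h : col a i = col a j) : i = j := by
  have h1 := pow_bb_eq a ha; have h2 := mm_lt a ha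
  unfold col at h; split_ifs at h <;> omega

lemma col_even (a : ℕ) (ha : 1 ≤ a) {j : ℕ} (hj : j < a) (hj2 : a - mm a ≤ j) :
    col a j % 2 = 0 ∧ col a j + 1 < 2 ^ bb a := by
  have h1 := pow_bb_eq a ha; have h2 := mm_lt a ha; have h3 := pow_bb_even a
  unfold col; rw [if_neg (by omega)]; omega

lemma col_ne (a : ℕ) (ha : 1 ≤ a) {i j : ℕ} (hi : i < a) (hj : j < a)
    (hj2 : a - mm a ≤ j) : col a i ≠ col a j + 1 := by
  have h1 := pow_bb_eq a ha; have h2 := mm_lt a ha; have h3 := pow_bb_even a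
  unfold col; split_ifs <;> omega

lemma col_zero (a : ℕ) (ha : 1 ≤ a) : col a 0 = 1 := by
  have h2 := mm_lt a ha
  unfold col; rw [if_pos (by omega)]

lemma col_surj_pow (a : ℕ) (ha : 1 ≤ a) {i : ℕ} (hi : i < bb a) :
    ∃ p, p < a ∧ col a p = 2 ^ i := by
  have hP := pow_bb_eq a ha; have hm := mm_lt a ha; have hh := pow_bb_half a ha
  rcases le_or_gt (2 ^ i) (a - mm a) with h | h
  · have h1 : 1 ≤ 2 ^ i := Nat.one_le_two_pow
    refine ⟨2 ^ i - 1, by omega, ?_⟩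
    unfold col; rw [if_pos (by omega)]; omega
  · obtain ⟨i', rfl⟩ : ∃ i', i = i' + 1 := by
      refine ⟨i - 1, ?_⟩
      rcases Nat.eq_zero_or_pos i with rfl | hpos
      · simp at h; omega
      · omega
    have hpow : 2 ^ (i' + 1) = 2 * 2 ^ i' := by rw [pow_succ]; ring
    have hlt : 2 ^ i' < 2 ^ (bb a - 1) := Nat.pow_lt_pow_right one_lt_two (by omega)
    refine ⟨a - 2 ^ (bb a - 1) + 2 ^ i', by omega, ?_⟩
    unfold col; rw [if_neg (by omega)]; omega
end

noncomputable section
open Finset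

lemma toVec_xor (n x y : ℕ) : toVec n (x ^^^ y) = toVec n x + toVec n y := by
  funext j
  simp only [toVec, Pi.add_apply, Nat.testBit_xor]
  cases hx : x.testBit (j : ℕ) <;> cases hy : y.testBit (j : ℕ) <;> simp <;> decide

lemma toVec_zero (n : ℕ) : toVec n 0 = 0 := by
  funext j; simp [toVec, Nat.zero_testBit]

lemma toVec_two_pow (n j : ℕ) (h : j < n) :
    toVec n (2 ^ j) = Pi.single (⟨j, h⟩ : Fin n) 1 := by
  funext i
  simp only [toVec, Nat.testBit_two_pow, Pi.single_apply]
  by_cases hij : j = (i : ℕ)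
  · rw [if_pos (by simpa using hij), if_pos (by exact Fin.ext hij.symm)]
  · rw [if_neg (by simpa using hij), if_neg (by intro hc; exact hij (by rw [hc]))]

lemma toVec_inj (n : ℕ) {x y : ℕ} (hx : x < 2 ^ n) (hy : y < 2 ^ n)
    (h : toVec n x = toVec n y) : x = y := by
  apply Nat.eq_of_testBit_eq
  intro i
  rcases lt_or_ge i n with hi | hi
  · have := congrFun h ⟨i, hi⟩
    simp only [toVec] at this
    cases hb1 : x.testBit i <;> cases hb2 : y.testBit i <;>
      simp [hb1, hb2] at this ⊢ <;> exact absurd this (by decide)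
  · have hx' : x < 2 ^ i := lt_of_lt_of_le hx (Nat.pow_le_pow_right (by norm_num) hi)
    have hy' : y < 2 ^ i := lt_of_lt_of_le hy (Nat.pow_le_pow_right (by norm_num) hi)
    rw [Nat.testBit_lt_two_pow hx', Nat.testBit_lt_two_pow hy']

lemma toVec_surj (n : ℕ) (v : Fin n → ZMod 2) : ∃ x, x < 2 ^ n ∧ toVec n x = v := by
  have hcard : Fintype.card (Fin n → ZMod 2) = 2 ^ n := by
    simp [ZMod.card]
  have himg : (Finset.range (2 ^ n)).image (toVec n) = Finset.univ := by
    apply Finset.eq_univ_of_card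
    rw [Finset.card_image_of_injOn, Finset.card_range, hcard]
    intro x hx y hy hxy
    exact toVec_inj n (Finset.mem_range.mp hx) (Finset.mem_range.mp hy) hxy
  have : v ∈ (Finset.range (2 ^ n)).image (toVec n) := by rw [himg]; exact Finset.mem_univ v
  obtain ⟨x, hx, hxe⟩ := Finset.mem_image.mp this
  exact ⟨x, Finset.mem_range.mp hx, hxe⟩

lemma one_xor_even {n : ℕ} (h : n % 2 = 0) : 1 ^^^ n = n + 1 := by
  apply Nat.eq_of_testBit_eq
  intro i
  cases i with
  | zero =>
      rw [Nat.testBit_xor, Nat.testBit_zero, Nat.testBit_zero, Nat.testBit_zero]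
      have h2 : (n + 1) % 2 = 1 := by omega
      rw [h, h2]; decide
  | succ i =>
      rw [Nat.testBit_xor]
      have h1 : Nat.testBit 1 (i + 1) = false := by
        have : (1 : ℕ) = 2 ^ 0 := rfl
        rw [this, Nat.testBit_two_pow]; simp
      rw [h1]
      have h2 : (n + 1) / 2 = n / 2 := by omega
      rw [Nat.testBit_add_one, Nat.testBit_add_one, h2]
      simp

def Lmap (a : ℕ) : (Fin a → ZMod 2) →ₗ[ZMod 2] (Fin (bb a) → ZMod 2) where
  toFun v := ∑ j, v j • toVec (bb a) (col a (j : ℕ))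
  map_add' u v := by
    simp [add_smul, Finset.sum_add_distrib]
  map_smul' c v := by
    simp [Finset.smul_sum, mul_smul]

lemma Lmap_apply (a : ℕ) (v : Fin a → ZMod 2) :
    Lmap a v = ∑ j, v j • toVec (bb a) (col a (j : ℕ)) := rfl

lemma Lmap_pow (a j : ℕ) (hj : j < a) :
    Lmap a (toVec a (2 ^ j)) = toVec (bb a) (col a j) := by
  rw [Lmap_apply, toVec_two_pow a j hj, Finset.sum_eq_single (⟨j, hj⟩ : Fin a)]
  · simp
  · intro b _ hb; rw [Pi.single_eq_of_ne hb, zero_smul]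
  · simp
end

noncomputable section
lemma mem_Ta_cases (a : ℕ) {s : ℕ} (hs : s ∈ Ta a) :
    s = 0 ∨ (∃ j < a, s = 2 ^ j) ∨
      (∃ j, a - mm a ≤ j ∧ j < a ∧ s = 1 ^^^ 2 ^ j) := by
  rcases hs with hp | hq
  · rcases hp with h0 | hpow
    · exact Or.inl h0
    · exact Or.inr (Or.inl hpow)
  · unfold Qa at hq
    split_ifs at hq with hk
    · exact absurd hq (Set.notMem_empty s)
    · exact Or.inr (Or.inr hq)

lemma Lmap_q (a : ℕ) (ha : 1 ≤ a) {j : ℕ} (hj : j < a) (hj2 : a - mm a ≤ j) :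
    Lmap a (toVec a (1 ^^^ 2 ^ j)) = toVec (bb a) (col a j + 1) := by
  have h1 : (1 : ℕ) = 2 ^ 0 := rfl
  rw [toVec_xor, map_add, h1, Lmap_pow a 0 (by omega), Lmap_pow a j hj, ← toVec_xor,
    pow_zero, col_zero a ha, one_xor_even (col_even a ha hj hj2).1]

lemma Lmap_Ta_inj (a : ℕ) (ha : 1 ≤ a) {s t : ℕ} (hs : s ∈ Ta a) (ht : t ∈ Ta a)
    (h : Lmap a (toVec a s) = Lmap a (toVec a t)) : s = t := by
  have hz : Lmap a (toVec a 0) = toVec (bb a) 0 := by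
    rw [toVec_zero, map_zero, toVec_zero]
  rcases mem_Ta_cases a hs with rfl | ⟨i, hi, rfl⟩ | ⟨i, hi1, hi2, rfl⟩ <;>
    rcases mem_Ta_cases a ht with rfl | ⟨j, hj, rfl⟩ | ⟨j, hj1, hj2, rfl⟩
  · rfl
  · rw [hz, Lmap_pow a j hj] at h
    have := toVec_inj (bb a) (by positivity) (col_pos_lt a ha hj).2 h
    exact absurd this.symm (by have := (col_pos_lt a ha hj).1; omega)
  · rw [hz, Lmap_q a ha hj2 hj1] at h
    have := toVec_inj (bb a) (by positivity) (col_even a ha hj2 hj1).2 h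
    omega
  · rw [hz, Lmap_pow a i hi] at h
    have := toVec_inj (bb a) (col_pos_lt a ha hi).2 (by positivity) h
    exact absurd this (by have := (col_pos_lt a ha hi).1; omega)
  · rw [Lmap_pow a i hi, Lmap_pow a j hj] at h
    have := toVec_inj (bb a) (col_pos_lt a ha hi).2 (col_pos_lt a ha hj).2 h
    rw [col_inj a ha hi hj this]
  · rw [Lmap_pow a i hi, Lmap_q a ha hj2 hj1] at h
    have := toVec_inj (bb a) (col_pos_lt a ha hi).2 (col_even a ha hj2 hj1).2 h
    exact absurd this (col_ne a ha hi hj2 hj1)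
  · rw [hz, Lmap_q a ha hi2 hi1] at h
    have := toVec_inj (bb a) (col_even a ha hi2 hi1).2 (by positivity) h
    omega
  · rw [Lmap_pow a j hj, Lmap_q a ha hi2 hi1] at h
    have := toVec_inj (bb a) (col_even a ha hi2 hi1).2 (col_pos_lt a ha hj).2 h
    exact absurd this.symm (col_ne a ha hj hi2 hi1)
  · rw [Lmap_q a ha hi2 hi1, Lmap_q a ha hj2 hj1] at h
    have := toVec_inj (bb a) (col_even a ha hi2 hi1).2 (col_even a ha hj2 hj1).2 h
    rw [col_inj a ha hi2 hj2 (by omega)]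
end

noncomputable section
lemma Lmap_surj (a : ℕ) (ha : 1 ≤ a) : Function.Surjective (Lmap a) := by
  have hsingle : ∀ i : Fin (bb a), Pi.single i (1 : ZMod 2) ∈ LinearMap.range (Lmap a) := by
    intro i
    obtain ⟨p, hp, hcol⟩ := col_surj_pow a ha i.isLt
    refine ⟨toVec a (2 ^ p), ?_⟩
    rw [Lmap_pow a p hp, hcol, toVec_two_pow (bb a) i i.isLt]
  intro w
  have hw : w = ∑ i, w i • Pi.single i (1 : ZMod 2) := by
    funext j
    rw [Finset.sum_apply]
    simp only [Pi.smul_apply, Pi.single_apply, smul_eq_mul]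
    have : ∀ i : Fin (bb a), w i * (if j = i then (1 : ZMod 2) else 0)
        = if i = j then w i else 0 := by
      intro i
      split_ifs with h1 h2 h3 <;> simp_all
    simp_rw [this]
    rw [Finset.sum_ite_eq' Finset.univ j (fun i => w i), if_pos (Finset.mem_univ j)]
  have : w ∈ LinearMap.range (Lmap a) := by
    rw [hw]
    exact Submodule.sum_mem _ fun i _ => Submodule.smul_mem _ _ (hsingle i)
  exact this

lemma ker_card (a : ℕ) (ha : 1 ≤ a) :
    Nat.card (LinearMap.ker (Lmap a)) = 2 ^ (a - bb a) := by
  have h1 := Submodule.card_eq_card_quotient_mul_card (LinearMap.ker (Lmap a))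
  have h2 : Nat.card ((Fin a → ZMod 2) ⧸ LinearMap.ker (Lmap a))
      = Nat.card (LinearMap.range (Lmap a)) :=
    Nat.card_congr (LinearMap.quotKerEquivRange (Lmap a)).toEquiv
  have h3 : LinearMap.range (Lmap a) = ⊤ := LinearMap.range_eq_top.mpr (Lmap_surj a ha)
  have h4 : Nat.card (LinearMap.range (Lmap a)) = Nat.card (Fin (bb a) → ZMod 2) := by
    rw [h3]; exact Nat.card_congr Submodule.topEquiv.toEquiv
  have h5 : Nat.card (Fin a → ZMod 2) = 2 ^ a := by
    simp [Nat.card_eq_fintype_card, ZMod.card]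
  have h6 : Nat.card (Fin (bb a) → ZMod 2) = 2 ^ bb a := by
    simp [Nat.card_eq_fintype_card, ZMod.card]
  have hba := bb_le a ha
  have h7 : (2 : ℕ) ^ a = 2 ^ (a - bb a) * 2 ^ bb a := by
    rw [← pow_add]; congr 1; omega
  rw [h5, h2, h4, h6, h7] at h1
  have hpos : (0 : ℕ) < 2 ^ bb a := by positivity
  exact (Nat.eq_of_mul_eq_mul_right hpos (by omega)).symm
end


/-- `Z_{2^a}` can be partitioned into `2^b` subsets of size
`2^(a-b)` such that any two distinct elements of the same subset have disjoint
translates `x ⊕ T_a` and `y ⊕ T_a`. -/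
theorem partition_exists (a : ℕ) (ha : 1 ≤ a) :
    ∃ C : Fin (2 ^ bb a) → Set ℕ,
      (∀ j k, j ≠ k → Disjoint (C j) (C k)) ∧
      (⋃ j, C j) = {x : ℕ | x < 2 ^ a} ∧
      (∀ j, (C j).ncard = 2 ^ (a - bb a)) ∧
      (∀ j, ∀ x ∈ C j, ∀ y ∈ C j, x ≠ y →
        Disjoint ((fun t => x ^^^ t) '' Ta a) ((fun t => y ^^^ t) '' Ta a)) := by
  refine ⟨fun j => {x | x < 2 ^ a ∧ Lmap a (toVec a x) = toVec (bb a) (j : ℕ)},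
    ?_, ?_, ?_, ?_⟩
  · intro j k hne
    rw [Set.disjoint_left]
    intro x hxj hxk
    exact hne (Fin.ext (toVec_inj (bb a) j.isLt k.isLt (hxj.2.symm.trans hxk.2)))
  · ext x
    simp only [Set.mem_iUnion, Set.mem_setOf_eq]
    constructor
    · rintro ⟨j, hj, _⟩; exact hj
    · intro hx
      obtain ⟨n, hn, hvn⟩ := toVec_surj (bb a) (Lmap a (toVec a x))
      exact ⟨⟨n, hn⟩, hx, hvn.symm⟩
  · intro j
    obtain ⟨v₀, hv₀⟩ := Lmap_surj a ha (toVec (bb a) (j : ℕ))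
    have hinj : Set.InjOn (toVec a)
        {x | x < 2 ^ a ∧ Lmap a (toVec a x) = toVec (bb a) (j : ℕ)} :=
      fun x hx y hy hxy => toVec_inj a hx.1 hy.1 hxy
    rw [← Set.ncard_image_of_injOn hinj]
    have himg : toVec a '' {x | x < 2 ^ a ∧ Lmap a (toVec a x) = toVec (bb a) (j : ℕ)}
        = (fun u => v₀ + u) '' (LinearMap.ker (Lmap a) : Set (Fin a → ZMod 2)) := by
      ext v
      constructor
      · rintro ⟨x, ⟨hx1, hx2⟩, rfl⟩
        refine ⟨toVec a x - v₀, ?_, by simp⟩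
        rw [SetLike.mem_coe, LinearMap.mem_ker, map_sub, hx2, hv₀, sub_self]
      · rintro ⟨u, hu, rfl⟩
        obtain ⟨x, hxlt, hxe⟩ := toVec_surj a (v₀ + u)
        refine ⟨x, ⟨hxlt, ?_⟩, hxe⟩
        rw [hxe, map_add, hv₀, LinearMap.mem_ker.mp (SetLike.mem_coe.mp hu), add_zero]
    rw [himg, Set.ncard_image_of_injOn (add_right_injective v₀).injOn,
      ← Nat.card_coe_set_eq]
    exact ker_card a ha
  · intro j x hx y hy hxy
    rw [Set.disjoint_left]
    rintro u ⟨s, hs, hsu⟩ ⟨t, ht, htu⟩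
    simp only at hsu htu
    have hst : x ^^^ s = y ^^^ t := by rw [hsu, htu]
    have h2 : Lmap a (toVec a x) + Lmap a (toVec a s)
        = Lmap a (toVec a y) + Lmap a (toVec a t) := by
      rw [← map_add, ← map_add, ← toVec_xor, ← toVec_xor, hst]
    rw [hx.2, hy.2] at h2
    have h3 := add_left_cancel h2
    have hste := Lmap_Ta_inj a ha hs ht h3
    subst hste
    refine hxy ?_
    have hxy2 : x ^^^ s ^^^ s = y ^^^ s ^^^ s := by rw [hst]
    simpa [Nat.xor_assoc, Nat.xor_self] using hxy2
end
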